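/- Let ‖·‖ be a norm on ℝ^n with dual norm ‖·‖_*, let f : ℝ^n → ℝ be convex, let λ > 0 and x ∈ ℝ^n, and suppose y₀ is a global minimizer of y ↦ f(y) + (1/(2λ))‖x−y‖². Then there exists g ∈ ∂f(y₀) such that ‖g‖_* = (1/λ)‖x−y₀‖ and ⟨g, x−y₀⟩ = (1/λ)‖x−y₀‖². -/

import Mathlib

open Pointwise

private lemma aux_slope {n : ℕ} (H : (Fin n → ℝ) → ℝ) (hH0 : H 0 = 0)
    (hcx : ∀ y z : Fin n → ℝ, ∀ a b : ℝ, 0 ≤ a → 0 ≤ b → a + b = 1 →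
      H (a • y + b • z) ≤ a * H y + b * H z)
    (a : Fin n → ℝ) {s t : ℝ} (hs : 0 < s) (hst : s ≤ t) :
    H (s • a) / s ≤ H (t • a) / t := by
  have ht : 0 < t := hs.trans_le hst
  have h1 : (0:ℝ) ≤ s / t := div_nonneg hs.le ht.le
  have h2 : s / t ≤ 1 := by rw [div_le_one ht]; exact hst
  have key := hcx (t • a) 0 (s/t) (1 - s/t) h1 (by linarith) (by ring)
  rw [smul_zero, add_zero, smul_smul, div_mul_cancel₀ _ ht.ne', hH0, mul_zero, add_zero] at key
  rw [div_le_div_iff₀ hs ht]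
  have h3 := mul_le_mul_of_nonneg_right key ht.le
  calc H (s • a) * t ≤ (s / t * H (t • a)) * t := h3
    _ = H (t • a) * s := by field_simp

private lemma aux_eps {a b : ℝ} (h : ∀ ε : ℝ, 0 < ε → a ≤ b + ε) : a ≤ b := by
  by_contra hc
  push_neg at hc
  have := h ((a - b)/2) (by linarith)
  linarith



/-- The dual norm of a norm `N` on `ℝⁿ`: `‖g‖_* = sup{⟨g,u⟩ : ‖u‖ ≤ 1}`. -/
noncomputable def dualNorm {n : ℕ} (N : (Fin n → ℝ) → ℝ) (g : Fin n → ℝ) : ℝ :=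
  sSup ((fun u : Fin n → ℝ => ∑ i, g i * u i) '' {u | N u ≤ 1})

set_option maxHeartbeats 4000000 in
/-- If `y₀` minimizes `y ↦ f(y) + (1/(2λ))‖x−y‖²`, then there exists a subgradient
`g ∈ ∂f(y₀)` with `‖g‖_* = (1/λ)‖x−y₀‖` and `⟨g, x−y₀⟩ = (1/λ)‖x−y₀‖²`. -/
theorem stmt7 {n : ℕ} (N : (Fin n → ℝ) → ℝ)
    (hN_triangle : ∀ x y, N (x + y) ≤ N x + N y)
    (hN_smul : ∀ (a : ℝ) (x : Fin n → ℝ), N (a • x) = |a| * N x)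
    (hN_def : ∀ x, N x = 0 ↔ x = 0)
    (f : (Fin n → ℝ) → ℝ) (hf : ConvexOn ℝ Set.univ f)
    (lam : ℝ) (hlam : 0 < lam)
    (x y₀ : Fin n → ℝ)
    (hy₀ : ∀ y, f y₀ + 1 / (2 * lam) * N (x - y₀) ^ 2 ≤ f y + 1 / (2 * lam) * N (x - y) ^ 2) :
    ∃ g : Fin n → ℝ,
      (∀ z, f z ≥ f y₀ + ∑ i, g i * (z - y₀) i) ∧
      dualNorm N g = (1 / lam) * N (x - y₀) ∧
      (∑ i, g i * (x - y₀) i) = (1 / lam) * N (x - y₀) ^ 2 := by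
  classical
  have hN0 : N 0 = 0 := (hN_def 0).2 rfl
  have hNneg : ∀ y, N (-y) = N y := by
    intro y
    have := hN_smul (-1) y
    simpa using this
  have hNnn : ∀ y, 0 ≤ N y := by
    intro y
    have h1 := hN_triangle y (-y)
    rw [add_neg_cancel, hN0, hNneg] at h1
    linarith
  by_cases hw0 : x - y₀ = 0
  · -- degenerate case x = y₀
    have hxy : x = y₀ := by
      have := sub_eq_zero.1 hw0
      exact this
    refine ⟨0, ?_, ?_, ?_⟩
    · intro z
      have hmin : f y₀ ≤ f z := by
        apply aux_eps
        intro ε hε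
        obtain ⟨K, hK⟩ : ∃ K : ℝ, K = N (z - y₀) := ⟨_, rfl⟩
        have hKnn : 0 ≤ K := hK ▸ hNnn _
        have hQnn : (0:ℝ) ≤ K^2 / (2*lam) := by positivity
        set t := min 1 (ε / (K^2 / (2*lam) + 1)) with htdef
        have ht0 : 0 < t := lt_min one_pos (by positivity)
        have ht1 : t ≤ 1 := min_le_left _ _
        have htQ : t * (K^2 / (2*lam)) ≤ ε := by
          have h1 : t ≤ ε / (K^2 / (2*lam) + 1) := min_le_right _ _
          have h2 : t * (K^2 / (2*lam)) ≤ (ε / (K^2 / (2*lam) + 1)) * (K^2 / (2*lam)) :=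
            mul_le_mul_of_nonneg_right h1 hQnn
          have h3 : (ε / (K^2 / (2*lam) + 1)) * (K^2 / (2*lam)) ≤ ε := by
            rw [div_mul_eq_mul_div, div_le_iff₀ (by positivity)]
            nlinarith
          linarith
        have hconv := hf.2 (Set.mem_univ y₀) (Set.mem_univ z)
          (by linarith : (0:ℝ) ≤ 1 - t) ht0.le (by ring)
        have hpt : (1 - t) • y₀ + t • z = y₀ + t • (z - y₀) := by
          ext i
          simp only [Pi.add_apply, Pi.smul_apply, Pi.sub_apply, smul_eq_mul]
          ring
        rw [hpt] at hconv
        have hmm := hy₀ (y₀ + t • (z - y₀))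
        rw [hw0] at hmm
        have hxx : x - (y₀ + t • (z - y₀)) = (-t) • (z - y₀) := by
          rw [hxy]
          ext i
          simp only [Pi.sub_apply, Pi.add_apply, Pi.smul_apply, smul_eq_mul, Pi.neg_apply]
          ring
        rw [hxx, hN_smul, hN0] at hmm
        simp only [smul_eq_mul] at hconv
        have hmm' : f y₀ ≤ f (y₀ + t • (z - y₀)) + 1/(2*lam) * (t*K)^2 := by
          rw [hK]
          have habs : |(-t)| = t := by rw [abs_of_nonpos (by linarith)]; ring
          rw [habs] at hmm
          nlinarith [hmm]
        have h5 : t * f y₀ ≤ t * (f z + t * (K^2 / (2*lam))) := by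
          have hexp : t * (f z + t * (K^2 / (2*lam))) = t * f z + 1/(2*lam)*(t*K)^2 := by
            field_simp
          rw [hexp]
          nlinarith [hmm', hconv]
        have h6 : f y₀ ≤ f z + t * (K^2 / (2*lam)) := le_of_mul_le_mul_left h5 ht0
        linarith
      simpa using hmin
    · have hone : (fun u : Fin n → ℝ => ∑ i, (0:Fin n → ℝ) i * u i) = fun _ => (0:ℝ) := by
        funext u
        simp
      rw [dualNorm, hone, hw0, hN0, mul_zero]
      rw [Set.Nonempty.image_const ⟨0, by simp [hN0]⟩]
      exact csSup_singleton 0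
    · rw [hw0, hN0]
      simp
  · -- main case: w ≠ 0
    obtain ⟨w, hw⟩ : ∃ w : Fin n → ℝ, w = x - y₀ := ⟨_, rfl⟩
    have hwne : w ≠ 0 := by rw [hw]; exact hw0
    obtain ⟨r, hr⟩ : ∃ r : ℝ, r = N w := ⟨_, rfl⟩
    have hr0 : 0 < r := by
      rcases lt_or_eq_of_le (hNnn w) with h | h
      · rw [hr]; exact h
      · exact absurd ((hN_def w).1 h.symm) hwne
    obtain ⟨F, hF⟩ : ∃ F : (Fin n → ℝ) → ℝ, F = fun y => f (y₀ + y) - f y₀ := ⟨_, rfl⟩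
    obtain ⟨G, hG⟩ : ∃ G : (Fin n → ℝ) → ℝ,
        G = fun y => 1/(2*lam) * (N (w - y)^2 - r^2) := ⟨_, rfl⟩
    have hF0 : F 0 = 0 := by rw [hF]; simp
    have hG0 : G 0 = 0 := by rw [hG]; simp [← hr]
    have hFcx : ∀ y z : Fin n → ℝ, ∀ a b : ℝ, 0 ≤ a → 0 ≤ b → a + b = 1 →
        F (a • y + b • z) ≤ a * F y + b * F z := by
      intro y z a b ha hb hab
      obtain rfl : b = 1 - a := by linarith
      have hconv := hf.2 (Set.mem_univ (y₀ + y)) (Set.mem_univ (y₀ + z)) ha hb hab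
      have hpt : a • (y₀ + y) + (1-a) • (y₀ + z) = y₀ + (a • y + (1-a) • z) := by
        ext i
        simp only [Pi.add_apply, Pi.smul_apply, smul_eq_mul]
        ring
      rw [hpt] at hconv
      simp only [smul_eq_mul] at hconv
      rw [hF]
      simp only
      nlinarith [hconv]
    have hGcx : ∀ y z : Fin n → ℝ, ∀ a b : ℝ, 0 ≤ a → 0 ≤ b → a + b = 1 →
        G (a • y + b • z) ≤ a * G y + b * G z := by
      intro y z a b ha hb hab
      obtain rfl : b = 1 - a := by linarith
      have hsplit : w - (a • y + (1-a) • z) = a • (w - y) + (1-a) • (w - z) := by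
        ext i
        simp only [Pi.sub_apply, Pi.add_apply, Pi.smul_apply, smul_eq_mul]
        ring
      have h1 : N (w - (a • y + (1-a) • z)) ≤ a * N (w - y) + (1-a) * N (w - z) := by
        rw [hsplit]
        calc N (a • (w - y) + (1-a) • (w - z)) ≤ N (a • (w - y)) + N ((1-a) • (w - z)) :=
              hN_triangle _ _
          _ = a * N (w - y) + (1-a) * N (w - z) := by
              rw [hN_smul, hN_smul, abs_of_nonneg ha, abs_of_nonneg hb]
      have h2 : N (w - (a • y + (1-a) • z))^2 ≤ a * N (w - y)^2 + (1-a) * N (w - z)^2 := by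
        nlinarith [hNnn (w - (a • y + (1-a) • z)), hNnn (w - y), hNnn (w - z),
          mul_nonneg ha hb, sq_nonneg (N (w - y) - N (w - z))]
      rw [hG]
      simp only
      have hpos : (0:ℝ) < 1/(2*lam) := by positivity
      nlinarith [mul_le_mul_of_nonneg_left h2 hpos.le]
    have hpoint : ∀ y, -G y ≤ F y := by
      intro y
      have hmm := hy₀ (y₀ + y)
      have hxx : x - (y₀ + y) = w - y := by
        rw [hw]; ext i; simp only [Pi.sub_apply, Pi.add_apply]; ring
      rw [hxx] at hmm
      rw [hF, hG]
      simp only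
      have hrw : N (x - y₀) = r := by rw [hw] at hr; exact hr.symm
      rw [hrw] at hmm
      nlinarith [hmm]
    -- slope monotonicity instances
    have hFslope : ∀ (a : Fin n → ℝ) {s t : ℝ}, 0 < s → s ≤ t →
        F (s • a) / s ≤ F (t • a) / t := fun a {s t} hs hst => aux_slope F hF0 hFcx a hs hst
    have hGslope : ∀ (a : Fin n → ℝ) {s t : ℝ}, 0 < s → s ≤ t →
        G (s • a) / s ≤ G (t • a) / t := fun a {s t} hs hst => aux_slope G hG0 hGcx a hs hst
    have hlow : ∀ (a : Fin n → ℝ) (t c : ℝ), 0 < t → t ≤ c → -G (c • a) / c ≤ F (t • a) / t := by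
      intro a t c ht htc
      have hc : 0 < c := ht.trans_le htc
      have h1 : G (t • a) / t ≤ G (c • a) / c := hGslope a ht htc
      have h2 : -G (t • a) ≤ F (t • a) := hpoint _
      calc -G (c • a) / c = -(G (c • a) / c) := neg_div _ _
        _ ≤ -(G (t • a) / t) := by linarith
        _ = -G (t • a) / t := (neg_div _ _).symm
        _ ≤ F (t • a) / t := by
            rw [div_le_div_iff₀ ht ht]
            nlinarith [mul_le_mul_of_nonneg_right h2 ht.le]
    have hdom : ∀ (a : Fin n → ℝ) (s t : ℝ), 0 < s → 0 < t →
        -G (t • a) / t ≤ F (s • a) / s := by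
      intro a s t hs ht
      rcases le_total s t with h | h
      · exact hlow a s t hs h
      · exact le_trans (hlow a t t ht le_rfl) (hFslope a ht h)
    -- the family of infima
    have hvne : ∀ (a : Fin n → ℝ) (c : ℝ), 0 < c →
        ((fun t => F (t • a) / t) '' Set.Ioc 0 c).Nonempty :=
      fun a c hc => ⟨_, ⟨c, ⟨hc, le_refl c⟩, rfl⟩⟩
    have hvbdd : ∀ (a : Fin n → ℝ) (c : ℝ), 0 < c →
        BddBelow ((fun t => F (t • a) / t) '' Set.Ioc 0 c) := by
      intro a c hc
      refine ⟨-G (c • a) / c, ?_⟩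
      rintro b ⟨t, ⟨ht0, htc⟩, rfl⟩
      exact hlow a t c ht0 htc
    obtain ⟨P, hP⟩ : ∃ P : (Fin n → ℝ) → ℝ,
        P = fun a => sInf ((fun t => F (t • a) / t) '' Set.Ioc 0 1) := ⟨_, rfl⟩
    have hinf_mono : ∀ (a : Fin n → ℝ) (c c' : ℝ), 0 < c → c ≤ c' →
        sInf ((fun t => F (t • a) / t) '' Set.Ioc 0 c)
          = sInf ((fun t => F (t • a) / t) '' Set.Ioc 0 c') := by
      intro a c c' hc hcc
      have hc' : 0 < c' := hc.trans_le hcc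
      apply le_antisymm
      · apply le_csInf (hvne a c' hc')
        rintro b ⟨t, ⟨ht0, htc⟩, rfl⟩
        have hmin : sInf ((fun t => F (t • a) / t) '' Set.Ioc 0 c) ≤ F ((min t c) • a) / (min t c) :=
          csInf_le (hvbdd a c hc) ⟨min t c, ⟨lt_min ht0 hc, min_le_right _ _⟩, rfl⟩
        exact hmin.trans (hFslope a (lt_min ht0 hc) (min_le_left _ _))
      · exact csInf_le_csInf (hvbdd a c' hc') (hvne a c hc)
          (Set.image_mono (Set.Ioc_subset_Ioc le_rfl hcc))
    have hinf_eq : ∀ (a : Fin n → ℝ) (c : ℝ), 0 < c →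
        sInf ((fun t => F (t • a) / t) '' Set.Ioc 0 c) = P a := by
      intro a c hc
      rw [hP]
      simp only
      rcases le_total c 1 with h | h
      · exact hinf_mono a c 1 hc h
      · exact (hinf_mono a 1 c one_pos h).symm
    have hPleF : ∀ a, P a ≤ F a := by
      intro a
      rw [hP]
      simp only
      have := csInf_le (hvbdd a 1 one_pos) ⟨1, ⟨one_pos, le_refl 1⟩, rfl⟩
      simpa using this
    have hP0 : P 0 = 0 := by
      rw [hP]
      simp only
      apply le_antisymm
      · have := csInf_le (hvbdd 0 1 one_pos) ⟨1, ⟨one_pos, le_refl 1⟩, rfl⟩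
        simpa [hF0] using this
      · apply le_csInf (hvne 0 1 one_pos)
        rintro b ⟨t, ⟨ht0, _⟩, rfl⟩
        simp [hF0]
    have hPhom : ∀ (c : ℝ), 0 < c → ∀ a, P (c • a) = c * P a := by
      intro c hc a
      have himg : (fun t => F (t • (c • a)) / t) '' Set.Ioc (0:ℝ) 1
          = (fun z => c * z) '' ((fun s => F (s • a) / s) '' Set.Ioc (0:ℝ) c) := by
        ext b
        simp only [Set.mem_image, Set.mem_Ioc]
        constructor
        · rintro ⟨t, ⟨ht0, ht1⟩, rfl⟩
          refine ⟨F ((t*c) • a) / (t*c), ⟨t*c, ⟨by positivity, by nlinarith⟩, rfl⟩, ?_⟩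
          rw [smul_smul]
          field_simp
        · rintro ⟨_, ⟨s, ⟨hs0, hsc⟩, rfl⟩, rfl⟩
          refine ⟨s/c, ⟨by positivity, by rw [div_le_one hc]; exact hsc⟩, ?_⟩
          rw [smul_smul, div_mul_cancel₀ _ hc.ne']
          field_simp
      rw [hP]
      simp only
      rw [himg]
      have : (fun z : ℝ => c * z) '' ((fun s => F (s • a) / s) '' Set.Ioc (0:ℝ) c)
          = c • ((fun s => F (s • a) / s) '' Set.Ioc (0:ℝ) c) := by
        simp only [← Set.image_smul, smul_eq_mul]
      rw [this, Real.sInf_smul_of_nonneg hc.le, smul_eq_mul]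
      congr 1
      have := hinf_eq a c hc
      rw [hP] at this
      simpa using this
    have hPsub : ∀ a b : Fin n → ℝ, P (a + b) ≤ P a + P b := by
      intro a b
      apply aux_eps
      intro ε hε
      have hlt1 : sInf ((fun t => F (t • a) / t) '' Set.Ioc 0 1) < P a + ε/2 := by
        rw [hinf_eq a 1 one_pos]; linarith
      have hlt2 : sInf ((fun t => F (t • b) / t) '' Set.Ioc 0 1) < P b + ε/2 := by
        rw [hinf_eq b 1 one_pos]; linarith
      obtain ⟨v1, ⟨s1, ⟨hs10, hs11⟩, rfl⟩, hv1⟩ := exists_lt_of_csInf_lt (hvne a 1 one_pos) hlt1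
      obtain ⟨v2, ⟨s2, ⟨hs20, hs21⟩, rfl⟩, hv2⟩ := exists_lt_of_csInf_lt (hvne b 1 one_pos) hlt2
      set s := min s1 s2 with hs
      have hs0 : 0 < s := lt_min hs10 hs20
      have hs1' : s ≤ 1 := le_trans (min_le_left _ _) hs11
      have ha1 : F (s • a) / s ≤ F (s1 • a) / s1 := hFslope a hs0 (min_le_left _ _)
      have hb1 : F (s • b) / s ≤ F (s2 • b) / s2 := hFslope b hs0 (min_le_right _ _)
      have hhalf : F ((s/2) • (a + b)) / (s/2) ≤ F (s • a) / s + F (s • b) / s := by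
        have hcomb := hFcx (s • a) (s • b) (1/2) (1/2) (by norm_num) (by norm_num) (by norm_num)
        have hpt : (1/2 : ℝ) • (s • a) + (1/2 : ℝ) • (s • b) = (s/2) • (a + b) := by
          ext i
          simp only [Pi.add_apply, Pi.smul_apply, smul_eq_mul]
          ring
        rw [hpt] at hcomb
        obtain ⟨A1, hA1⟩ : ∃ A1 : ℝ, A1 = F (s • a) := ⟨_, rfl⟩
        obtain ⟨A2, hA2⟩ : ∃ A2 : ℝ, A2 = F (s • b) := ⟨_, rfl⟩
        obtain ⟨A3, hA3⟩ : ∃ A3 : ℝ, A3 = F ((s/2) • (a + b)) := ⟨_, rfl⟩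
        rw [← hA1, ← hA2, ← hA3] at hcomb ⊢
        rw [div_add_div _ _ hs0.ne' hs0.ne',
          div_le_div_iff₀ (by positivity) (by positivity : (0:ℝ) < s * s)]
        calc A3 * (s * s) ≤ (1/2*A1 + 1/2*A2) * (s * s) :=
              mul_le_mul_of_nonneg_right hcomb (mul_pos hs0 hs0).le
          _ = (A1 * s + s * A2) * (s / 2) := by ring
      have hPle : P (a + b) ≤ F ((s/2) • (a + b)) / (s/2) := by
        rw [hP]
        simp only
        exact csInf_le (hvbdd (a+b) 1 one_pos) ⟨s/2, ⟨by positivity, by linarith⟩, rfl⟩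
      linarith
    have hq_bound : ∀ (c : ℝ) (a : Fin n → ℝ),
        c * (r^2/lam) - r/lam * N (c • w - a) ≤ P a := by
      intro c a
      apply aux_eps
      intro ε hε
      obtain ⟨B, hB⟩ : ∃ B : ℝ, B = N (c • w - a) := ⟨_, rfl⟩
      have hBnn : 0 ≤ B := hB ▸ hNnn _
      obtain ⟨t, ht0, ht1, htc, hte⟩ : ∃ t : ℝ, 0 < t ∧ t ≤ 1 ∧ t * c ≤ 1 ∧
          t * ((c*r - B)^2 + 1) ≤ 2*lam*ε := by
        refine ⟨min (1/(1+|c|)) (2*lam*ε/((c*r - B)^2+1)),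
          lt_min (by positivity) (by positivity), ?_, ?_, ?_⟩
        · have h1 : min (1/(1+|c|)) (2*lam*ε/((c*r - B)^2+1)) ≤ 1/(1+|c|) := min_le_left _ _
          have h2 : 1/(1+|c|) ≤ 1 := by
            rw [div_le_one (by positivity)]
            linarith [abs_nonneg c]
          linarith
        · have ht0' : 0 < min (1/(1+|c|)) (2*lam*ε/((c*r - B)^2+1)) :=
            lt_min (by positivity) (by positivity)
          have h1 : min (1/(1+|c|)) (2*lam*ε/((c*r - B)^2+1)) ≤ 1/(1+|c|) := min_le_left _ _
          have h2 : min (1/(1+|c|)) (2*lam*ε/((c*r - B)^2+1)) * c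
              ≤ min (1/(1+|c|)) (2*lam*ε/((c*r - B)^2+1)) * |c| :=
            mul_le_mul_of_nonneg_left (le_abs_self c) ht0'.le
          have h3 : min (1/(1+|c|)) (2*lam*ε/((c*r - B)^2+1)) * |c| ≤ (1/(1+|c|)) * |c| :=
            mul_le_mul_of_nonneg_right h1 (abs_nonneg c)
          have h4 : (1/(1+|c|)) * |c| ≤ 1 := by
            rw [div_mul_eq_mul_div, div_le_one (by positivity)]
            linarith [abs_nonneg c]
          linarith
        · have h1 : min (1/(1+|c|)) (2*lam*ε/((c*r - B)^2+1)) ≤ 2*lam*ε/((c*r - B)^2+1) :=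
            min_le_right _ _
          rw [le_div_iff₀ (by positivity)] at h1
          linarith
      have hstep1 : -G (t • a) / t ≤ P a := by
        rw [hP]
        simp only
        apply le_csInf (hvne a 1 one_pos)
        rintro b ⟨s, ⟨hs0, _⟩, rfl⟩
        exact hdom a s t hs0 ht0
      have hY : N (w - t • a) ≤ (1 - t*c)*r + t*B := by
        have hsplit : w - t • a = (1 - t*c) • w + t • (c • w - a) := by
          ext i
          simp only [Pi.sub_apply, Pi.add_apply, Pi.smul_apply, smul_eq_mul]
          ring
        rw [hsplit]
        calc N ((1 - t*c) • w + t • (c • w - a))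
            ≤ N ((1 - t*c) • w) + N (t • (c • w - a)) := hN_triangle _ _
          _ = (1 - t*c)*r + t*B := by
              rw [hN_smul, hN_smul, abs_of_nonneg (by linarith : (0:ℝ) ≤ 1 - t*c),
                abs_of_nonneg ht0.le, ← hr, ← hB]
      have hNta : 0 ≤ N (w - t • a) := hNnn _
      have hsq : N (w - t • a)^2 ≤ ((1 - t*c)*r + t*B)^2 := by
        nlinarith [hY, hNta]
      have hnum : 2*t*(c*r^2 - r*B) - t^2*(c*r - B)^2 ≤ r^2 - N (w - t • a)^2 := by
        nlinarith [hsq]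
      have hGt : -G (t • a) / t = (r^2 - N (w - t • a)^2) / (2*lam*t) := by
        rw [hG]
        simp only
        field_simp
        ring
      have htarget : c * (r^2/lam) - r/lam * B - ε ≤ (r^2 - N (w - t • a)^2) / (2*lam*t) := by
        rw [le_div_iff₀ (by positivity : (0:ℝ) < 2*lam*t)]
        have hexp : (c*(r^2/lam) - r/lam*B - ε) * (2*lam*t) = 2*t*(c*r^2 - r*B) - 2*lam*t*ε := by
          field_simp
        rw [hexp]
        nlinarith [hnum, mul_le_mul_of_nonneg_left hte ht0.le, ht0, sq_nonneg (c*r - B)]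
      rw [← hB]
      calc c * (r^2/lam) - r/lam * B ≤ (r^2 - N (w - t • a)^2) / (2*lam*t) + ε := by linarith
        _ = -G (t • a) / t + ε := by rw [hGt]
        _ ≤ P a + ε := by linarith
    -- the sublinear majorant M (inf-convolution)
    have hCnn : (0:ℝ) ≤ r/lam := by positivity
    obtain ⟨M, hM⟩ : ∃ M : (Fin n → ℝ) → ℝ,
        M = fun d => sInf (Set.range fun a => P a + r/lam * N (d - a)) := ⟨_, rfl⟩
    have hMeq : ∀ d, M d = sInf (Set.range fun a => P a + r/lam * N (d - a)) :=
      fun d => by rw [hM]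
    have hMne : ∀ d : Fin n → ℝ, (Set.range fun a => P a + r/lam * N (d - a)).Nonempty :=
      fun d => ⟨_, ⟨0, rfl⟩⟩
    have hPlow : ∀ a : Fin n → ℝ, -(r/lam) * N a ≤ P a := by
      intro a
      have h := hq_bound 0 a
      have h0 : (0:ℝ) • w - a = -a := by ext i; simp
      rw [h0, hNneg] at h
      linarith
    have hMbdd : ∀ d : Fin n → ℝ,
        BddBelow (Set.range fun a => P a + r/lam * N (d - a)) := by
      intro d
      refine ⟨-(r/lam) * N d, ?_⟩
      rintro b ⟨a, rfl⟩
      simp only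
      have h1 := hPlow a
      have h2 : N a ≤ N (d - a) + N d := by
        have h3 := hN_triangle (-(d - a)) d
        have h4 : -(d - a) + d = a := by ext i; simp
        rw [h4, hNneg] at h3
        exact h3
      nlinarith [mul_le_mul_of_nonneg_left h2 hCnn]
    have hMleP : ∀ d, M d ≤ P d := by
      intro d
      rw [hMeq]
      have := csInf_le (hMbdd d) ⟨d, rfl⟩
      simpa [sub_self, hN0] using this
    have hMadd : ∀ d₁ d₂, M (d₁ + d₂) ≤ M d₁ + M d₂ := by
      intro d₁ d₂
      apply aux_eps
      intro ε hε
      obtain ⟨b1, ⟨a1, rfl⟩, hb1⟩ := exists_lt_of_csInf_lt (hMne d₁)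
        (show sInf _ < M d₁ + ε/2 by rw [hMeq d₁]; linarith)
      obtain ⟨b2, ⟨a2, rfl⟩, hb2⟩ := exists_lt_of_csInf_lt (hMne d₂)
        (show sInf _ < M d₂ + ε/2 by rw [hMeq d₂]; linarith)
      simp only at hb1 hb2
      have hMle : M (d₁ + d₂) ≤ P (a1 + a2) + r/lam * N ((d₁ + d₂) - (a1 + a2)) := by
        rw [hMeq]
        exact csInf_le (hMbdd _) ⟨a1 + a2, rfl⟩
      have htri : N ((d₁ + d₂) - (a1 + a2)) ≤ N (d₁ - a1) + N (d₂ - a2) := by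
        have h5 := hN_triangle (d₁ - a1) (d₂ - a2)
        have heq : (d₁ - a1) + (d₂ - a2) = (d₁ + d₂) - (a1 + a2) := by ext i; simp; ring
        rw [heq] at h5
        exact h5
      have hps := hPsub a1 a2
      nlinarith [mul_le_mul_of_nonneg_left htri hCnn]
    have hMhom : ∀ c : ℝ, 0 < c → ∀ d, M (c • d) = c * M d := by
      intro c hc d
      have himg : (Set.range fun a => P a + r/lam * N (c • d - a))
          = (fun z => c * z) '' (Set.range fun a => P a + r/lam * N (d - a)) := by
        ext b
        simp only [Set.mem_range, Set.mem_image]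
        constructor
        · rintro ⟨a, rfl⟩
          refine ⟨P (c⁻¹ • a) + r/lam * N (d - c⁻¹ • a), ⟨c⁻¹ • a, rfl⟩, ?_⟩
          have h1 : P a = c * P (c⁻¹ • a) := by
            rw [← hPhom c hc (c⁻¹ • a), smul_smul, mul_inv_cancel₀ hc.ne', one_smul]
          have h2 : N (c • d - a) = c * N (d - c⁻¹ • a) := by
            have heq : c • d - a = c • (d - c⁻¹ • a) := by
              rw [smul_sub, smul_smul, mul_inv_cancel₀ hc.ne', one_smul]
            rw [heq, hN_smul, abs_of_nonneg hc.le]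
          rw [h1, h2]; ring
        · rintro ⟨_, ⟨a, rfl⟩, rfl⟩
          refine ⟨c • a, ?_⟩
          have h1 : P (c • a) = c * P a := hPhom c hc a
          have h2 : N (c • d - c • a) = c * N (d - a) := by
            rw [← smul_sub, hN_smul, abs_of_nonneg hc.le]
          rw [h1, h2]; ring
      have himg2 : (fun z : ℝ => c * z) '' (Set.range fun a => P a + r/lam * N (d - a))
          = c • (Set.range fun a => P a + r/lam * N (d - a)) := by
        simp only [← Set.image_smul, smul_eq_mul]
      rw [hMeq, hMeq, himg, himg2, Real.sInf_smul_of_nonneg hc.le, smul_eq_mul]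
    have hMspan : ∀ c : ℝ, c * (r^2/lam) ≤ M (c • w) := by
      intro c
      rw [hMeq]
      apply le_csInf (hMne _)
      rintro b ⟨a, rfl⟩
      simp only
      linarith [hq_bound c a]
    -- Hahn-Banach extension
    have hfside : ∀ z : (LinearPMap.mkSpanSingleton (K := ℝ) (σ := RingHom.id ℝ) w (r^2/lam) hwne).domain,
        (LinearPMap.mkSpanSingleton (K := ℝ) (σ := RingHom.id ℝ) w (r^2/lam) hwne) z ≤ M z := by
      rintro ⟨z, hz⟩
      have hz' : z ∈ Submodule.span ℝ {w} := hz
      obtain ⟨c, hc⟩ := Submodule.mem_span_singleton.1 hz'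
      subst hc
      have happ : (LinearPMap.mkSpanSingleton (K := ℝ) (σ := RingHom.id ℝ) w (r^2/lam) hwne) ⟨c • w, hz⟩
          = c • (r^2/lam) := LinearPMap.mkSpanSingleton'_apply w (r^2/lam) _ c hz
      rw [happ, smul_eq_mul]
      exact hMspan c
    obtain ⟨ℓ, hl1, hl2⟩ := exists_extension_of_le_sublinear
      (LinearPMap.mkSpanSingleton (K := ℝ) (σ := RingHom.id ℝ) w (r^2/lam) hwne) M
      (fun c hc d => hMhom c hc d) hMadd hfside
    have hlw : ℓ w = r^2/lam := by
      have hmem : w ∈ (LinearPMap.mkSpanSingleton (K := ℝ) (σ := RingHom.id ℝ) w (r^2/lam) hwne).domain :=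
        Submodule.mem_span_singleton_self w
      have h1 := hl1 ⟨w, hmem⟩
      have h2 : (LinearPMap.mkSpanSingleton (K := ℝ) (σ := RingHom.id ℝ) w (r^2/lam) hwne) ⟨w, hmem⟩
          = r^2/lam := LinearPMap.mkSpanSingleton_apply ℝ ℝ hwne (r^2/lam)
      rw [h2] at h1
      exact h1
    have hsubF : ∀ u, ℓ u ≤ F u := fun u => le_trans (hl2 u) (le_trans (hMleP u) (hPleF u))
    have hub : ∀ u, ℓ u ≤ r/lam * N u := by
      intro u
      have h1 := hl2 u
      have h2 : M u ≤ P 0 + r/lam * N (u - 0) := by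
        rw [hMeq]
        exact csInf_le (hMbdd u) ⟨0, rfl⟩
      rw [hP0, sub_zero, zero_add] at h2
      linarith
    have hrep : ∀ u : Fin n → ℝ,
        ∑ i, ℓ (fun j => if i = j then (1:ℝ) else 0) * u i = ℓ u := by
      intro u
      calc ∑ i, ℓ (fun j => if i = j then (1:ℝ) else 0) * u i
          = ∑ i, ℓ (u i • fun j => if i = j then (1:ℝ) else 0) := by
            refine Finset.sum_congr rfl fun i _ => ?_
            rw [map_smul, smul_eq_mul]
            ring
        _ = ℓ (∑ i, u i • fun j => if i = j then (1:ℝ) else 0) := (map_sum ℓ _ _).symm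
        _ = ℓ u := by rw [← pi_eq_sum_univ u]
    have hrweq : N (x - y₀) = r := by rw [← hw, ← hr]
    refine ⟨fun i => ℓ (fun j => if i = j then (1:ℝ) else 0), ?_, ?_, ?_⟩
    · intro z
      simp only
      rw [hrep (z - y₀)]
      have h1 := hsubF (z - y₀)
      rw [hF] at h1
      simp only at h1
      have h2 : y₀ + (z - y₀) = z := by ext i; simp
      rw [h2] at h1
      linarith
    · rw [dualNorm, hrweq]
      have hbound : ∀ b ∈ (fun u : Fin n → ℝ =>
          ∑ i, ℓ (fun j => if i = j then (1:ℝ) else 0) * u i) '' {u | N u ≤ 1},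
          b ≤ 1/lam * r := by
        rintro b ⟨u, hu, rfl⟩
        simp only
        rw [hrep u]
        have h1 := hub u
        have h2 : r/lam * N u ≤ r/lam * 1 := mul_le_mul_of_nonneg_left hu hCnn
        calc ℓ u ≤ r/lam * N u := h1
          _ ≤ r/lam * 1 := h2
          _ = 1/lam * r := by ring
      have hmem : 1/lam * r ∈ (fun u : Fin n → ℝ =>
          ∑ i, ℓ (fun j => if i = j then (1:ℝ) else 0) * u i) '' {u | N u ≤ 1} := by
        refine ⟨r⁻¹ • w, ?_, ?_⟩
        · show N (r⁻¹ • w) ≤ 1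
          rw [hN_smul, abs_of_nonneg (by positivity : (0:ℝ) ≤ r⁻¹), ← hr,
            inv_mul_cancel₀ hr0.ne']
        · simp only
          rw [hrep (r⁻¹ • w), map_smul, smul_eq_mul, hlw]
          field_simp
      exact le_antisymm (csSup_le ⟨_, hmem⟩ hbound)
        (le_csSup ⟨1/lam * r, fun b hb => hbound b hb⟩ hmem)
    · simp only
      have hgoal : x - y₀ = w := hw.symm
      rw [hgoal, ← hr, hrep w, hlw]
      ring
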